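/- Exchange lemma for the variable-capacity problem: Let V : {1,…,N} → {L,H} be an advertisement sequence with V_k = L and V_{k+1} = H for some 1 ≤ k ≤ N−1, and let Q be the sequence obtained from V by swapping these two entries (Q_k = H, Q_{k+1} = L, Q_i = V_i for all other i). Then for every initial reputation R_1 ∈ [0,1], the full-fill total profits satisfy Π(Q, R_1) ≥ Π(V, R_1). -/

import Mathlib

noncomputable section

/-- Post-advertisement reputation map. -/
def frep (α R a : ℝ) : ℝ := R + (1 - R) * a ^ α

/-- Demand function. -/
def dem (Λ q x : ℝ) : ℝ := if 0 < x then max 0 (Λ * (1 - q / x)) else 0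

/-- Full-fill reputation trajectory (0-indexed periods). -/
def rep (α w Λ q : ℝ) (A : ℕ → ℝ) (R1 : ℝ) : ℕ → ℝ
  | 0 => R1
  | i + 1 =>
      let R' := frep α (rep α w Λ q A R1 i) (A i)
      if 0 < dem Λ q R' then (1 - w) * R' + w else R'

/-- Full-fill total profit over horizon `N`. -/
def profit (α w Λ q p c cA : ℝ) (A : ℕ → ℝ) (R1 : ℝ) (N : ℕ) : ℝ :=
  ∑ i ∈ Finset.range N,
    ((p - c) * dem Λ q (frep α (rep α w Λ q A R1 i) (A i)) - cA * A i)


/-! ### Auxiliary lemmas -/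

/-- The one-period reputation update step. -/
def stp (w Λ q x : ℝ) : ℝ := if 0 < dem Λ q x then (1 - w) * x + w else x

lemma rep_succ (α w Λ q : ℝ) (A : ℕ → ℝ) (R1 : ℝ) (i : ℕ) :
    rep α w Λ q A R1 (i + 1) = stp w Λ q (frep α (rep α w Λ q A R1 i) (A i)) := rfl

lemma dem_pos_iff {Λ q : ℝ} (hΛ : 0 < Λ) (hq : 0 < q) (x : ℝ) :
    0 < dem Λ q x ↔ q < x := by
  constructor
  · intro h
    by_contra hle
    push_neg at hle
    have h0 : dem Λ q x = 0 := by
      unfold dem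
      split
      · rename_i hx
        have h1 : 1 ≤ q / x := (one_le_div hx).mpr hle
        have h2 : Λ * (1 - q / x) ≤ 0 := by nlinarith
        exact max_eq_left h2
      · rfl
    rw [h0] at h
    exact lt_irrefl 0 h
  · intro h
    have hx : 0 < x := hq.trans h
    have h1 : q / x < 1 := (div_lt_one hx).mpr h
    have h2 : 0 < Λ * (1 - q / x) := mul_pos hΛ (by linarith)
    unfold dem
    rw [if_pos hx]
    exact lt_max_iff.mpr (Or.inr h2)

lemma dem_mono {Λ q : ℝ} (hΛ : 0 < Λ) (hq : 0 < q) {x y : ℝ} (h : x ≤ y) :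
    dem Λ q x ≤ dem Λ q y := by
  unfold dem
  by_cases hx : 0 < x
  · have hy : 0 < y := lt_of_lt_of_le hx h
    rw [if_pos hx, if_pos hy]
    apply max_le_max le_rfl
    have hdiv : q / y ≤ q / x := by
      apply div_le_div_of_nonneg_left hq.le hx h
    nlinarith
  · rw [if_neg hx]
    split
    · exact le_max_left 0 _
    · exact le_rfl

lemma frep_nonneg {α : ℝ} (hα : 0 < α) {R a : ℝ} (hR0 : 0 ≤ R) (hR1 : R ≤ 1)
    (h0 : 0 ≤ a) : 0 ≤ frep α R a := by
  have h2 := Real.rpow_nonneg h0 α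
  unfold frep; nlinarith

lemma frep_le_one {α : ℝ} (hα : 0 < α) {R a : ℝ} (hR1 : R ≤ 1) (h0 : 0 ≤ a)
    (h1 : a ≤ 1) : frep α R a ≤ 1 := by
  have h2 := Real.rpow_nonneg h0 α
  have h3 := Real.rpow_le_one h0 h1 hα.le
  unfold frep; nlinarith

lemma frep_mono_R {α : ℝ} (hα : 0 < α) {R R' a : ℝ} (h : R ≤ R') (h0 : 0 ≤ a)
    (h1 : a ≤ 1) : frep α R a ≤ frep α R' a := by
  have h3 := Real.rpow_le_one h0 h1 hα.le
  have h2 := Real.rpow_nonneg h0 α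
  unfold frep; nlinarith

lemma frep_mono_a {α : ℝ} (hα : 0 < α) {R a b : ℝ} (hR1 : R ≤ 1) (h0 : 0 ≤ a)
    (hab : a ≤ b) : frep α R a ≤ frep α R b := by
  have h3 := Real.rpow_le_rpow h0 hab hα.le
  unfold frep; nlinarith

lemma stp_eq_pos {w Λ q x : ℝ} (hΛ : 0 < Λ) (hq : 0 < q) (h : q < x) :
    stp w Λ q x = (1 - w) * x + w := if_pos ((dem_pos_iff hΛ hq x).mpr h)

lemma stp_eq_neg {w Λ q x : ℝ} (hΛ : 0 < Λ) (hq : 0 < q) (h : ¬ q < x) :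
    stp w Λ q x = x := if_neg (fun hp => h ((dem_pos_iff hΛ hq x).mp hp))

lemma stp_le_one {w Λ q x : ℝ} (hw : w ≤ 1) (hx : x ≤ 1) : stp w Λ q x ≤ 1 := by
  unfold stp; split
  · nlinarith
  · exact hx

lemma stp_nonneg {w Λ q x : ℝ} (hw0 : 0 ≤ w) (hw1 : w ≤ 1) (hx : 0 ≤ x) :
    0 ≤ stp w Λ q x := by
  unfold stp; split
  · nlinarith
  · exact hx

lemma stp_mono {Λ q : ℝ} (hΛ : 0 < Λ) (hq : 0 < q) {w x y : ℝ} (hw0 : 0 ≤ w)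
    (hw1 : w ≤ 1) (hxy : x ≤ y) (hy1 : y ≤ 1) : stp w Λ q x ≤ stp w Λ q y := by
  by_cases hx : q < x
  · have hy : q < y := lt_of_lt_of_le hx hxy
    rw [stp_eq_pos hΛ hq hx, stp_eq_pos hΛ hq hy]
    nlinarith
  · rw [stp_eq_neg hΛ hq hx]
    by_cases hy : q < y
    · rw [stp_eq_pos hΛ hq hy]
      push_neg at hx
      nlinarith
    · rw [stp_eq_neg hΛ hq hy]
      exact hxy

lemma frep_comm (α R a b : ℝ) :
    frep α (frep α R a) b = frep α (frep α R b) a := by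
  unfold frep; ring

lemma frep_swap (α R L H w : ℝ) :
    frep α ((1 - w) * frep α R L + w) H = frep α ((1 - w) * frep α R H + w) L := by
  unfold frep; ring

/-- Key two-period exchange inequality. -/
lemma key_step {α w Λ q L H : ℝ} (hα : 0 < α) (hΛ : 0 < Λ) (hq : 0 < q)
    (hw0 : 0 ≤ w) (hw1 : w ≤ 1) (hL0 : 0 ≤ L) (hLH : L ≤ H) (hH1 : H ≤ 1)
    {R : ℝ} (hR0 : 0 ≤ R) (hR1 : R ≤ 1) :
    frep α (stp w Λ q (frep α R L)) H ≤ frep α (stp w Λ q (frep α R H)) L := by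
  have hH0 : 0 ≤ H := hL0.trans hLH
  have hL1 : L ≤ 1 := hLH.trans hH1
  have hxy : frep α R L ≤ frep α R H := frep_mono_a hα hR1 hL0 hLH
  have hy1 : frep α R H ≤ 1 := frep_le_one hα hR1 hH0 hH1
  by_cases h1 : q < frep α R L
  · have h2 : q < frep α R H := h1.trans_le hxy
    rw [stp_eq_pos hΛ hq h1, stp_eq_pos hΛ hq h2]
    exact (frep_swap α R L H w).le
  · rw [stp_eq_neg hΛ hq h1]
    by_cases h2 : q < frep α R H
    · rw [stp_eq_pos hΛ hq h2]
      calc frep α (frep α R L) H = frep α (frep α R H) L := frep_comm α R L H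
        _ ≤ frep α ((1 - w) * frep α R H + w) L :=
            frep_mono_R hα (by nlinarith) hL0 hL1
    · rw [stp_eq_neg hΛ hq h2]
      exact (frep_comm α R L H).le

lemma rep_mem {α w Λ q : ℝ} (hα : 0 < α) (hw0 : 0 ≤ w) (hw1 : w ≤ 1)
    (A : ℕ → ℝ) (hA : ∀ i, 0 ≤ A i ∧ A i ≤ 1) {R1 : ℝ} (h0 : 0 ≤ R1)
    (h1 : R1 ≤ 1) : ∀ i, 0 ≤ rep α w Λ q A R1 i ∧ rep α w Λ q A R1 i ≤ 1 := by
  intro i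
  induction i with
  | zero => exact ⟨h0, h1⟩
  | succ n ih =>
    rw [rep_succ]
    have hf0 : 0 ≤ frep α (rep α w Λ q A R1 n) (A n) :=
      frep_nonneg hα ih.1 ih.2 (hA n).1
    have hf1 : frep α (rep α w Λ q A R1 n) (A n) ≤ 1 :=
      frep_le_one hα ih.2 (hA n).1 (hA n).2
    exact ⟨stp_nonneg hw0 hw1 hf0, stp_le_one hw1 hf1⟩

/-- Exchange lemma: swapping an adjacent pair `(L, H)` in the advertisement
sequence to `(H, L)` does not decrease the full-fill total profit.
(Periods are 0-indexed: `k` and `k+1` are consecutive periods within the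
horizon `N`.) -/
theorem exchange_lemma_variable_capacity
    (Λ c p cA m u α w L H q : ℝ) (N k : ℕ)
    (hΛ : 0 < Λ) (hc : 0 < c) (hcp : c < p) (hcA : 0 ≤ cA)
    (hm : 0 < m) (hu : 0 ≤ u) (hqdef : q = (u + p) / m) (hq1 : q < 1)
    (hα : 0 < α) (hw0 : 0 ≤ w) (hw1 : w ≤ 1)
    (hL0 : 0 ≤ L) (hLH : L < H) (hH1 : H ≤ 1)
    (hk : k + 2 ≤ N)
    (V Q : ℕ → ℝ) (hV : ∀ i, V i = L ∨ V i = H)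
    (hVk : V k = L) (hVk1 : V (k + 1) = H)
    (hQk : Q k = H) (hQk1 : Q (k + 1) = L)
    (hQother : ∀ i, i ≠ k → i ≠ k + 1 → Q i = V i)
    (R1 : ℝ) (hR10 : 0 ≤ R1) (hR11 : R1 ≤ 1) :
    profit α w Λ q p c cA V R1 N ≤ profit α w Λ q p c cA Q R1 N := by
  have hp : 0 < p := hc.trans hcp
  have hq0 : 0 < q := by rw [hqdef]; exact div_pos (by linarith) hm
  have hH0 : 0 ≤ H := hL0.trans hLH.le
  have hL1 : L ≤ 1 := hLH.le.trans hH1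
  have hVb : ∀ i, 0 ≤ V i ∧ V i ≤ 1 := by
    intro i
    rcases hV i with h | h <;> rw [h] <;> exact ⟨by linarith, by linarith⟩
  have hQb : ∀ i, 0 ≤ Q i ∧ Q i ≤ 1 := by
    intro i
    by_cases h1 : i = k
    · rw [h1, hQk]; exact ⟨hH0, hH1⟩
    · by_cases h2 : i = k + 1
      · rw [h2, hQk1]; exact ⟨hL0, hL1⟩
      · rw [hQother i h1 h2]; exact hVb i
  set RV := rep α w Λ q V R1 with hRV
  set RQ := rep α w Λ q Q R1 with hRQ
  have hVm : ∀ i, 0 ≤ RV i ∧ RV i ≤ 1 := rep_mem hα hw0 hw1 V hVb hR10 hR11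
  have hQm : ∀ i, 0 ≤ RQ i ∧ RQ i ≤ 1 := rep_mem hα hw0 hw1 Q hQb hR10 hR11
  -- agreement up to period k
  have hagree : ∀ i, i ≤ k → RQ i = RV i := by
    intro i
    induction i with
    | zero => intro _; rfl
    | succ n ih =>
      intro hn
      have hn' : n ≤ k := by omega
      rw [hRV, hRQ, rep_succ, rep_succ, ← hRV, ← hRQ, ih hn',
          hQother n (by omega) (by omega)]
  -- explicit forms of the four relevant reputations
  have h1 : RV (k + 1) = stp w Λ q (frep α (RV k) L) := by
    rw [hRV, rep_succ, ← hRV, hVk]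
  have h2 : RQ (k + 1) = stp w Λ q (frep α (RV k) H) := by
    rw [hRQ, rep_succ, ← hRQ, hagree k le_rfl, hQk]
  -- key inequality on post-advertisement reputations in period k+1
  have hkey : frep α (RV (k + 1)) H ≤ frep α (RQ (k + 1)) L := by
    rw [h1, h2]
    exact key_step hα hΛ hq0 hw0 hw1 hL0 hLH.le hH1 (hVm k).1 (hVm k).2
  -- comparison at period k+2
  have hk2 : RV (k + 2) ≤ RQ (k + 2) := by
    have h3 : RV (k + 2) = stp w Λ q (frep α (RV (k + 1)) H) := by
      rw [show k + 2 = (k + 1) + 1 from rfl, hRV, rep_succ, ← hRV, hVk1]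
    have h4 : RQ (k + 2) = stp w Λ q (frep α (RQ (k + 1)) L) := by
      rw [show k + 2 = (k + 1) + 1 from rfl, hRQ, rep_succ, ← hRQ, hQk1]
    rw [h3, h4]
    apply stp_mono hΛ hq0 hw0 hw1 hkey
    exact frep_le_one hα (hQm (k + 1)).2 hL0 hL1
  -- tail comparison
  have htail : ∀ j, RV (k + 2 + j) ≤ RQ (k + 2 + j) := by
    intro j
    induction j with
    | zero => exact hk2
    | succ n ih =>
      rw [show k + 2 + (n + 1) = (k + 2 + n) + 1 from rfl, hRV, hRQ,
          rep_succ, rep_succ, ← hRV, ← hRQ,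
          hQother (k + 2 + n) (by omega) (by omega)]
      apply stp_mono hΛ hq0 hw0 hw1
      · exact frep_mono_R hα ih (hVb _).1 (hVb _).2
      · exact frep_le_one hα (hQm _).2 (hVb _).1 (hVb _).2
  -- per-period demand comparison
  have hdem : ∀ i, dem Λ q (frep α (RV i) (V i)) ≤ dem Λ q (frep α (RQ i) (Q i)) := by
    intro i
    rcases lt_trichotomy i k with hik | hik | hik
    · rw [hagree i hik.le, hQother i (by omega) (by omega)]
    · rw [hik, hVk, hQk, hagree k le_rfl]
      exact dem_mono hΛ hq0 (frep_mono_a hα (hVm k).2 hL0 hLH.le)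
    · rcases eq_or_lt_of_le (show k + 1 ≤ i from hik) with heq | hgt
      · rw [← heq, hVk1, hQk1]
        exact dem_mono hΛ hq0 hkey
      · obtain ⟨j, rfl⟩ : ∃ j, i = k + 2 + j := ⟨i - (k + 2), by omega⟩
        rw [hQother (k + 2 + j) (by omega) (by omega)]
        exact dem_mono hΛ hq0 (frep_mono_R hα (htail j) (hVb _).1 (hVb _).2)
  -- the advertising costs are equal in total
  have hkN : k ∈ Finset.range N := Finset.mem_range.mpr (by omega)
  have hk1N : k + 1 ∈ Finset.range N := Finset.mem_range.mpr (by omega)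
  have hcAsum : ∑ i ∈ Finset.range N, (Q i - V i) = 0 := by
    have hcong : ∀ i ∈ Finset.range N, Q i - V i =
        (if i = k then H - L else 0) + (if i = k + 1 then L - H else 0) := by
      intro i _
      by_cases hc1 : i = k
      · subst hc1
        rw [hVk, hQk, if_pos rfl, if_neg (by omega)]; ring
      · by_cases hc2 : i = k + 1
        · subst hc2
          rw [hVk1, hQk1, if_neg hc1, if_pos rfl]; ring
        · rw [hQother i hc1 hc2, if_neg hc1, if_neg hc2]; ring
    rw [Finset.sum_congr rfl hcong, Finset.sum_add_distrib,
        Finset.sum_ite_eq' (Finset.range N) k (fun _ => H - L),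
        Finset.sum_ite_eq' (Finset.range N) (k + 1) (fun _ => L - H),
        if_pos hkN, if_pos hk1N]
    ring
  -- total demand comparison
  have hdsum : 0 ≤ ∑ i ∈ Finset.range N,
      (dem Λ q (frep α (RQ i) (Q i)) - dem Λ q (frep α (RV i) (V i))) :=
    Finset.sum_nonneg fun i _ => sub_nonneg.mpr (hdem i)
  -- expand the difference of profits
  have hexp : profit α w Λ q p c cA Q R1 N - profit α w Λ q p c cA V R1 N =
      (p - c) * (∑ i ∈ Finset.range N,
        (dem Λ q (frep α (RQ i) (Q i)) - dem Λ q (frep α (RV i) (V i))))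
      - cA * ∑ i ∈ Finset.range N, (Q i - V i) := by
    rw [hRV, hRQ]
    unfold profit
    rw [← Finset.sum_sub_distrib, Finset.mul_sum, Finset.mul_sum,
        ← Finset.sum_sub_distrib]
    apply Finset.sum_congr rfl
    intro i _
    ring
  have hfin : 0 ≤ (p - c) * (∑ i ∈ Finset.range N,
      (dem Λ q (frep α (RQ i) (Q i)) - dem Λ q (frep α (RV i) (V i)))) :=
    mul_nonneg (by linarith) hdsum
  rw [hcAsum, mul_zero, sub_zero] at hexp
  linarith [hexp, hfin]
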